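/- Under the ADDA setup, for every k ≥ 0 one has ‖X − X_k‖₂ ≤ (‖X‖₂ + ‖X‖₂²‖Y‖₂)·‖𝒞(S;α)^{2^k}‖₂·‖𝒞(R;α)^{2^k}‖₂, and if the spectral radius ρ(𝒞(R;α)) < 1 and ρ(𝒞(S;α)) < 1 then ‖X − X_k‖₂ → 0 as k → ∞. -/

import Mathlib

open Matrix Filter
open scoped Matrix.Norms.L2Operator MatrixOrder InnerProductSpace RealInnerProductSpace

namespace ADDAProof

variable {n : ℕ}

local notation "Mat" => Matrix (Fin n) (Fin n) ℝ

lemma mulinv (W : Mat) (h : IsUnit W) : W * W⁻¹ = 1 :=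
  Matrix.mul_nonsing_inv W (W.isUnit_iff_isUnit_det.mp h)

lemma invmul (W : Mat) (h : IsUnit W) : W⁻¹ * W = 1 :=
  Matrix.nonsing_inv_mul W (W.isUnit_iff_isUnit_det.mp h)

lemma unitT {W : Mat} (h : IsUnit W) : IsUnit Wᵀ := by
  rw [Matrix.isUnit_iff_isUnit_det, Matrix.det_transpose]
  exact W.isUnit_iff_isUnit_det.mp h

lemma lcancel {W M N : Mat} (h : IsUnit W) (e : W * M = W * N) : M = N := by
  calc M = W⁻¹ * (W * M) := by rw [← mul_assoc, invmul _ h, one_mul]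
  _ = W⁻¹ * (W * N) := by rw [e]
  _ = N := by rw [← mul_assoc, invmul _ h, one_mul]

lemma unit_factor_right {W M : Mat} (h : IsUnit (W * M)) : IsUnit M := by
  rw [Matrix.isUnit_iff_isUnit_det, Matrix.det_mul] at h
  exact (Matrix.isUnit_iff_isUnit_det M).mpr (isUnit_of_mul_isUnit_right h)

lemma unit_factor_left {W M : Mat} (h : IsUnit (M * W)) : IsUnit M := by
  rw [Matrix.isUnit_iff_isUnit_det, Matrix.det_mul] at h
  exact (Matrix.isUnit_iff_isUnit_det M).mpr (isUnit_of_mul_isUnit_left h)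

lemma push (a b : Mat) (h1 : IsUnit (1 + a * b)) (h2 : IsUnit (1 + b * a)) :
    (1 + a * b)⁻¹ * a = a * (1 + b * a)⁻¹ := by
  have key : (1 + a * b) * (a * (1 + b * a)⁻¹) = a := by
    have : (1 + a * b) * a = a * (1 + b * a) := by noncomm_ring
    rw [← mul_assoc, this, mul_assoc, mulinv _ h2, mul_one]
  calc (1 + a * b)⁻¹ * a = (1 + a * b)⁻¹ * ((1 + a * b) * (a * (1 + b * a)⁻¹)) := by rw [key]
  _ = a * (1 + b * a)⁻¹ := by rw [← mul_assoc, invmul _ h1, one_mul]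

lemma core_e (E a b W P : Mat) (h1 : IsUnit (1 + a * b)) (h2 : IsUnit (1 + b * a))
    (hE : E = (1 + a * W) * P) (hg : W - b = Eᵀ * W * P) :
    E * (1 + a * b)⁻¹ * E = (1 + (a + E * a * (1 + b * a)⁻¹ * Eᵀ) * W) * (P * P) := by
  have key : (1 + a * b)⁻¹ * (1 + a * W) = 1 + a * ((1 + b * a)⁻¹ * (Eᵀ * W * P)) := by
    have h' : (1 : Mat) + a * W = (1 + a * b) + a * (W - b) := by noncomm_ring
    rw [h', mul_add, invmul _ h1, hg, ← mul_assoc, push a b h1 h2, mul_assoc]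
  calc E * (1 + a * b)⁻¹ * E = E * ((1 + a * b)⁻¹ * (1 + a * W)) * P := by
        nth_rw 2 [hE]; noncomm_ring
  _ = E * (1 + a * ((1 + b * a)⁻¹ * (Eᵀ * W * P))) * P := by rw [key]
  _ = E * P + E * a * (1 + b * a)⁻¹ * Eᵀ * W * (P * P) := by noncomm_ring
  _ = (1 + a * W) * (P * P) + E * a * (1 + b * a)⁻¹ * Eᵀ * W * (P * P) := by
        nth_rw 1 [hE]; noncomm_ring
  _ = (1 + (a + E * a * (1 + b * a)⁻¹ * Eᵀ) * W) * (P * P) := by noncomm_ring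

lemma core_g (E a b W P : Mat) (h2 : IsUnit (1 + b * a))
    (hE : E = (1 + a * W) * P) (hg : W - b = Eᵀ * W * P) :
    W - (b + Eᵀ * (1 + b * a)⁻¹ * b * E) = Eᵀ * (1 + b * a)⁻¹ * Eᵀ * W * (P * P) := by
  have h5 : (1 + b * a) * (W * P) - b * E = (W - b) * P := by rw [hE]; noncomm_ring
  have h6 : Eᵀ * ((1 + b * a)⁻¹ * ((1 + b * a) * (W * P) - b * E))
      = Eᵀ * W * P - Eᵀ * (1 + b * a)⁻¹ * b * E := by
    rw [mul_sub, ← mul_assoc ((1 + b * a)⁻¹), invmul _ h2, one_mul, mul_sub]; noncomm_ring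
  calc W - (b + Eᵀ * (1 + b * a)⁻¹ * b * E)
      = Eᵀ * W * P - Eᵀ * (1 + b * a)⁻¹ * b * E := by rw [← hg]; abel
  _ = Eᵀ * ((1 + b * a)⁻¹ * ((W - b) * P)) := by rw [← h6, h5]
  _ = Eᵀ * (1 + b * a)⁻¹ * Eᵀ * W * (P * P) := by rw [hg]; noncomm_ring

lemma psd_smul (c : ℝ) (hc : 0 ≤ c) {M : Mat} (h : M.PosSemidef) : (c • M).PosSemidef := by
  refine PosSemidef.of_dotProduct_mulVec_nonneg ?_ (fun x => ?_)
  · show (c • M)ᴴ = c • M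
    rw [Matrix.conjTranspose_smul, h.1, star_trivial]
  · rw [Matrix.smul_mulVec, dotProduct_smul, smul_eq_mul]
    exact mul_nonneg hc (h.dotProduct_mulVec_nonneg x)

lemma psd_mid {a b : Mat} (ha : a.PosSemidef) (hb : b.PosSemidef)
    (h1 : IsUnit (1 + a * b)) (h2 : IsUnit (1 + b * a)) :
    PosSemidef ((1 + b * a)⁻¹ * b) := by
  set s := CFC.sqrt b with hsdef
  have hss : s * s = b := CFC.sqrt_mul_sqrt_self b hb.nonneg
  have hsh : sᴴ = s := (CFC.sqrt_nonneg b).posSemidef.1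
  have hsas : PosSemidef (s * a * s) := by
    have := ha.mul_mul_conjTranspose_same s
    rwa [hsh] at this
  have hpd : Matrix.PosDef (1 + s * a * s) := Matrix.PosDef.add_posSemidef Matrix.PosDef.one hsas
  have hu : IsUnit (1 + s * a * s) := hpd.isUnit
  have key : (1 + b * a)⁻¹ * b = s * (1 + s * a * s)⁻¹ * s := by
    have e0 : ((1 + b * a)⁻¹ * b) * (1 + a * b) = b := by
      have h' : b * (1 + a * b) = (1 + b * a) * b := by noncomm_ring
      rw [mul_assoc, h', ← mul_assoc, invmul _ h2, one_mul]
    have e1 : (s * (1 + s * a * s)⁻¹ * s) * (1 + a * b) = b := by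
      have h' : s * (1 + a * b) = (1 + s * a * s) * s := by
        rw [← hss]; noncomm_ring
      calc (s * (1 + s * a * s)⁻¹ * s) * (1 + a * b)
          = s * (1 + s * a * s)⁻¹ * ((1 + s * a * s) * s) := by rw [← h', mul_assoc]
      _ = b := by rw [mul_assoc _ _ ((1 + s * a * s) * s), ← mul_assoc (1 + s * a * s)⁻¹,
            invmul _ hu, one_mul, hss]
    calc (1 + b * a)⁻¹ * b
        = (((1 + b * a)⁻¹ * b) * (1 + a * b)) * (1 + a * b)⁻¹ := by
          rw [mul_assoc, mulinv _ h1, mul_one]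
    _ = ((s * (1 + s * a * s)⁻¹ * s) * (1 + a * b)) * (1 + a * b)⁻¹ := by rw [e0, e1]
    _ = s * (1 + s * a * s)⁻¹ * s := by rw [mul_assoc, mulinv _ h1, mul_one]
  rw [key]
  have hpsd : PosSemidef ((1 + s * a * s)⁻¹) := hpd.inv.posSemidef
  have := hpsd.mul_mul_conjTranspose_same s
  rwa [hsh] at this

lemma psd_norm_le {A B : Mat} (hA : A.PosSemidef) (hBA : (B - A).PosSemidef) : ‖A‖ ≤ ‖B‖ := by
  set s := CFC.sqrt A with hsdef
  have hss : s * s = A := CFC.sqrt_mul_sqrt_self A hA.nonneg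
  have hsh : sᴴ = s := (CFC.sqrt_nonneg A).posSemidef.1
  have hst : sᵀ = s := by rw [← Matrix.conjTranspose_eq_transpose_of_trivial]; exact hsh
  have hnorms : ‖s‖ * ‖s‖ = ‖A‖ := by
    rw [← Matrix.l2_opNorm_conjTranspose_mul_self s, hsh, hss]
  have quad : ∀ x : EuclideanSpace ℝ (Fin n),
      (x : Fin n → ℝ) ⬝ᵥ (A *ᵥ (x : Fin n → ℝ)) ≤ ‖B‖ * (‖x‖ * ‖x‖) := by
    intro x
    have h1 : (x : Fin n → ℝ) ⬝ᵥ (A *ᵥ x) ≤ (x : Fin n → ℝ) ⬝ᵥ (B *ᵥ x) := by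
      have := hBA.dotProduct_mulVec_nonneg x
      rw [star_trivial, Matrix.sub_mulVec, dotProduct_sub] at this
      linarith
    have h2 : (x : Fin n → ℝ) ⬝ᵥ (B *ᵥ x) ≤ ‖B‖ * (‖x‖ * ‖x‖) := by
      have hip : (x : Fin n → ℝ) ⬝ᵥ (B *ᵥ x)
          = ⟪x, (EuclideanSpace.equiv (Fin n) ℝ).symm (B *ᵥ x)⟫_ℝ := by
        rw [EuclideanSpace.inner_eq_star_dotProduct, star_trivial, dotProduct_comm]
        rfl
      rw [hip]
      calc ⟪x, (EuclideanSpace.equiv (Fin n) ℝ).symm (B *ᵥ x)⟫_ℝ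
          ≤ ‖x‖ * ‖(EuclideanSpace.equiv (Fin n) ℝ).symm (B *ᵥ x)‖ := real_inner_le_norm _ _
      _ ≤ ‖x‖ * (‖B‖ * ‖x‖) := by
          refine mul_le_mul_of_nonneg_left ?_ (norm_nonneg x)
          exact Matrix.l2_opNorm_mulVec B x
      _ = ‖B‖ * (‖x‖ * ‖x‖) := by ring
    linarith
  have bound : ∀ x : EuclideanSpace ℝ (Fin n),
      ‖(EuclideanSpace.equiv (Fin n) ℝ).symm (A *ᵥ (x : Fin n → ℝ))‖
        ≤ (‖s‖ * Real.sqrt ‖B‖) * ‖x‖ := by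
    intro x
    set sx : EuclideanSpace ℝ (Fin n) := (EuclideanSpace.equiv (Fin n) ℝ).symm (s *ᵥ x) with hsx
    have hAx : A *ᵥ (x : Fin n → ℝ) = s *ᵥ (sx : Fin n → ℝ) := by
      show A *ᵥ (x : Fin n → ℝ) = s *ᵥ (s *ᵥ (x : Fin n → ℝ))
      rw [Matrix.mulVec_mulVec, hss]
    have hsxnorm : ‖sx‖ * ‖sx‖ ≤ ‖B‖ * (‖x‖ * ‖x‖) := by
      have hinner : ‖sx‖ * ‖sx‖ = (x : Fin n → ℝ) ⬝ᵥ (A *ᵥ (x : Fin n → ℝ)) := by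
        rw [← real_inner_self_eq_norm_mul_norm]
        rw [EuclideanSpace.inner_eq_star_dotProduct]
        show (s *ᵥ (x : Fin n → ℝ)) ⬝ᵥ (star (s *ᵥ (x : Fin n → ℝ))) = _
        rw [star_trivial, dotProduct_mulVec, ← Matrix.mulVec_transpose,
          Matrix.mulVec_mulVec, hst, hss]
        exact dotProduct_comm _ _
      rw [hinner]; exact quad x
    have hsxn : ‖sx‖ ≤ Real.sqrt ‖B‖ * ‖x‖ := by
      nlinarith [norm_nonneg sx, norm_nonneg x, Real.sq_sqrt (norm_nonneg B),
        Real.sqrt_nonneg ‖B‖, sq_nonneg (‖sx‖ - Real.sqrt ‖B‖ * ‖x‖),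
        mul_nonneg (Real.sqrt_nonneg ‖B‖) (norm_nonneg x)]
    calc ‖(EuclideanSpace.equiv (Fin n) ℝ).symm (A *ᵥ (x : Fin n → ℝ))‖
        = ‖(EuclideanSpace.equiv (Fin n) ℝ).symm (s *ᵥ (sx : Fin n → ℝ))‖ := by rw [hAx]
    _ ≤ ‖s‖ * ‖sx‖ := Matrix.l2_opNorm_mulVec s sx
    _ ≤ ‖s‖ * (Real.sqrt ‖B‖ * ‖x‖) := by
        refine mul_le_mul_of_nonneg_left hsxn (norm_nonneg s)
    _ = (‖s‖ * Real.sqrt ‖B‖) * ‖x‖ := by ring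
  have hAle : ‖A‖ ≤ ‖s‖ * Real.sqrt ‖B‖ := by
    rw [Matrix.l2_opNorm_def]
    refine ContinuousLinearMap.opNorm_le_bound _
      (mul_nonneg (norm_nonneg s) (Real.sqrt_nonneg _)) (fun x => ?_)
    exact bound x
  nlinarith [norm_nonneg s, norm_nonneg A, norm_nonneg B, Real.sq_sqrt (norm_nonneg B),
    Real.sqrt_nonneg ‖B‖, sq_nonneg (‖s‖ - Real.sqrt ‖B‖)]

lemma norm_one_le : ‖(1 : Mat)‖ ≤ 1 := by
  calc ‖(1 : Mat)‖ = ‖Matrix.toEuclideanCLM (n := Fin n) (𝕜 := ℝ) (1 : Mat)‖ := rfl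
  _ = ‖(1 : EuclideanSpace ℝ (Fin n) →L[ℝ] EuclideanSpace ℝ (Fin n))‖ := by rw [_root_.map_one]
  _ ≤ 1 := by rw [ContinuousLinearMap.one_def]; exact ContinuousLinearMap.norm_id_le

lemma real_norm_le_complex (M : Mat) :
    ‖M‖ ≤ ‖M.map (algebraMap ℝ ℂ)‖ := by
  set Mc := M.map (algebraMap ℝ ℂ) with hMc
  rw [Matrix.l2_opNorm_def]
  refine ContinuousLinearMap.opNorm_le_bound _ (norm_nonneg Mc) (fun x => ?_)
  set xc : EuclideanSpace ℂ (Fin n) :=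
    (EuclideanSpace.equiv (Fin n) ℂ).symm (fun i => ((x : Fin n → ℝ) i : ℂ)) with hxc
  have hnx : ‖xc‖ = ‖x‖ := by
    rw [EuclideanSpace.norm_eq, EuclideanSpace.norm_eq]
    congr 1
    apply Finset.sum_congr rfl
    intro i _
    simp [hxc, Complex.norm_real]
  have hmv : ∀ i, (Mc *ᵥ (xc : Fin n → ℂ)) i = (((M *ᵥ (x : Fin n → ℝ)) i : ℝ) : ℂ) := by
    intro i
    simp only [Matrix.mulVec, dotProduct, hMc, Matrix.map_apply]
    push_cast
    rfl
  have key : ‖(EuclideanSpace.equiv (Fin n) ℝ).symm (M *ᵥ (x : Fin n → ℝ))‖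
      = ‖(EuclideanSpace.equiv (Fin n) ℂ).symm (Mc *ᵥ (xc : Fin n → ℂ))‖ := by
    rw [EuclideanSpace.norm_eq, EuclideanSpace.norm_eq]
    congr 1
    apply Finset.sum_congr rfl
    intro i _
    simp [hmv i, Complex.norm_real]
  calc ‖(EuclideanSpace.equiv (Fin n) ℝ).symm (M *ᵥ (x : Fin n → ℝ))‖
      = ‖(EuclideanSpace.equiv (Fin n) ℂ).symm (Mc *ᵥ (xc : Fin n → ℂ))‖ := key
  _ ≤ ‖Mc‖ * ‖xc‖ := Matrix.l2_opNorm_mulVec Mc xc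
  _ = ‖Mc‖ * ‖x‖ := by rw [hnx]

lemma pow_norm_tendsto (a : Matrix (Fin n) (Fin n) ℂ) (h : spectralRadius ℂ a < 1) :
    Tendsto (fun m : ℕ => ‖a ^ m‖) atTop (nhds 0) := by
  obtain ⟨c, hc1, hc2⟩ := exists_between h
  have hgel := spectrum.pow_nnnorm_pow_one_div_tendsto_nhds_spectralRadius a
  have hev : ∀ᶠ m : ℕ in atTop, (‖a ^ m‖₊ : ENNReal) ^ (1 / (m : ℝ)) < c :=
    hgel.eventually_lt_const hc1
  have hcne : c ≠ ⊤ := (hc2.trans_le le_top).ne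
  have hcr1 : c.toReal < 1 := by
    have := ENNReal.toReal_lt_toReal hcne (by norm_num : (1 : ENNReal) ≠ ⊤)
    simpa using this.mpr hc2
  have hbound : ∀ᶠ m : ℕ in atTop, ‖a ^ m‖ ≤ c.toReal ^ m := by
    filter_upwards [hev, eventually_ge_atTop 1] with m hm hm1
    have hmne : (m : ℝ) ≠ 0 := by positivity
    have h1 : ((‖a ^ m‖₊ : ENNReal) ^ (1 / (m : ℝ))) ^ (m : ℝ) ≤ c ^ (m : ℝ) :=
      ENNReal.rpow_le_rpow hm.le (by positivity)
    rw [← ENNReal.rpow_mul, one_div_mul_cancel hmne, ENNReal.rpow_one,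
      ENNReal.rpow_natCast] at h1
    have h2 : (‖a ^ m‖₊ : ENNReal).toReal ≤ (c ^ m).toReal :=
      ENNReal.toReal_mono (ENNReal.pow_ne_top hcne) h1
    rw [ENNReal.toReal_pow] at h2
    simpa using h2
  refine squeeze_zero' (Eventually.of_forall fun m => norm_nonneg _) hbound ?_
  exact tendsto_pow_atTop_nhds_zero_of_lt_one ENNReal.toReal_nonneg hcr1

lemma two_pow_tendsto : Tendsto (fun k : ℕ => 2 ^ k) atTop atTop :=
  tendsto_atTop_mono (fun k => (Nat.lt_two_pow_self (n := k)).le) tendsto_id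

lemma care_key {A G Q X R : Mat} {α : ℝ} {Aα : Mat}
    (hAα : Aα = A - α • 1)
    (hCARE : Aᵀ * X + X * A + Q - X * G * X = 0)
    (hR : R = A - G * X) :
    X * (R + α • 1) = -(Aαᵀ * X + Q) := by
  have hAαT : Aαᵀ = Aᵀ - α • 1 := by
    rw [hAα, Matrix.transpose_sub, Matrix.transpose_smul, Matrix.transpose_one]
  rw [hR, hAαT]
  have key : X * (A - G * X + α • 1) + ((Aᵀ - α • 1) * X + Q)
      = Aᵀ * X + X * A + Q - X * G * X := by noncomm_ring
  have h2 : X * (A - G * X + α • 1) + ((Aᵀ - α • 1) * X + Q) = 0 := by rw [key, hCARE]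
  exact eq_neg_of_add_eq_zero_left h2

lemma hRalpha {A G X R : Mat} {α : ℝ} {Aα : Mat}
    (hAα : Aα = A - α • 1) (hR : R = A - G * X) :
    R - α • 1 = Aα - G * X := by
  rw [hR, hAα]; abel

lemma claim_c1 {G Q : Mat} {Aα Uα Vα : Mat}
    (hUα : Uα = Aαᵀ + Q * Aα⁻¹ * G) (hVα : Vα = Aα + G * (Aαᵀ)⁻¹ * Q)
    (hAαu : IsUnit Aα) (hUαu : IsUnit Uα) :
    Vα * (Aα⁻¹ * G * Uα⁻¹) = G * (Aαᵀ)⁻¹ := by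
  have hAαuT : IsUnit Aαᵀ := unitT hAαu
  have e2 : Aα * (Aα⁻¹ * (G * Uα⁻¹)) = G * Uα⁻¹ := by
    rw [← mul_assoc, mulinv _ hAαu, one_mul]
  have e3 : G * ((Aαᵀ)⁻¹ * (Aαᵀ * Uα⁻¹)) = G * Uα⁻¹ := by
    rw [← mul_assoc ((Aαᵀ)⁻¹), invmul _ hAαuT, one_mul]
  calc Vα * (Aα⁻¹ * G * Uα⁻¹)
      = Aα * (Aα⁻¹ * (G * Uα⁻¹)) + G * (Aαᵀ)⁻¹ * (Q * Aα⁻¹ * G * Uα⁻¹) := by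
        rw [hVα]; noncomm_ring
  _ = G * ((Aαᵀ)⁻¹ * (Aαᵀ * Uα⁻¹)) + G * (Aαᵀ)⁻¹ * (Q * Aα⁻¹ * G * Uα⁻¹) := by rw [e2, e3]
  _ = G * (Aαᵀ)⁻¹ * ((Aαᵀ + Q * Aα⁻¹ * G) * Uα⁻¹) := by noncomm_ring
  _ = G * (Aαᵀ)⁻¹ * (Uα * Uα⁻¹) := by rw [← hUα]
  _ = G * (Aαᵀ)⁻¹ := by rw [mulinv _ hUαu, mul_one]

lemma base_e (A G Q X : Mat) (α : ℝ) (Aα Uα Vα R : Mat)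
    (hAα : Aα = A - α • 1) (hUα : Uα = Aαᵀ + Q * Aα⁻¹ * G) (hVα : Vα = Aα + G * (Aαᵀ)⁻¹ * Q)
    (hAαu : IsUnit Aα) (hUαu : IsUnit Uα) (hVαu : IsUnit Vα)
    (hCARE : Aᵀ * X + X * A + Q - X * G * X = 0)
    (hR : R = A - G * X) (hRu : IsUnit (R - α • 1)) :
    1 + (2 * α) • Vα⁻¹
      = (1 + ((2 * α) • (Aα⁻¹ * G * Uα⁻¹)) * X) * ((R + α • 1) * (R - α • 1)⁻¹) := by
  have hAαuT : IsUnit Aαᵀ := unitT hAαu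
  have key1 : X * (R + α • 1) = -(Aαᵀ * X + Q) := care_key hAα hCARE hR
  have c1 := claim_c1 hUα hVα hAαu hUαu
  have s : Vα⁻¹ * (R - α • 1) = 1 + Aα⁻¹ * G * Uα⁻¹ * (X * (R + α • 1)) := by
    have e4 : Vα * (1 + Aα⁻¹ * G * Uα⁻¹ * (X * (R + α • 1))) = R - α • 1 := by
      rw [mul_add, mul_one, ← mul_assoc, c1, key1, hVα, hRalpha hAα hR]
      have e5 : G * ((Aαᵀ)⁻¹ * (Aαᵀ * X)) = G * X := by
        rw [← mul_assoc ((Aαᵀ)⁻¹), invmul _ hAαuT, one_mul]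
      calc Aα + G * (Aαᵀ)⁻¹ * Q + G * (Aαᵀ)⁻¹ * -(Aαᵀ * X + Q)
          = Aα - G * ((Aαᵀ)⁻¹ * (Aαᵀ * X)) := by noncomm_ring
      _ = Aα - G * X := by rw [e5]
    calc Vα⁻¹ * (R - α • 1)
        = Vα⁻¹ * (Vα * (1 + Aα⁻¹ * G * Uα⁻¹ * (X * (R + α • 1)))) := by rw [e4]
    _ = 1 + Aα⁻¹ * G * Uα⁻¹ * (X * (R + α • 1)) := by rw [← mul_assoc, invmul _ hVαu, one_mul]
  have main : (1 + (2 * α) • Vα⁻¹) * (R - α • 1)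
      = (1 + ((2 * α) • (Aα⁻¹ * G * Uα⁻¹)) * X) * (R + α • 1) := by
    calc (1 + (2 * α) • Vα⁻¹) * (R - α • 1)
        = (R - α • 1) + (2 * α) • (Vα⁻¹ * (R - α • 1)) := by
          rw [add_mul, one_mul, smul_mul_assoc]
    _ = (R - α • 1) + (2 * α) • (1 + Aα⁻¹ * G * Uα⁻¹ * (X * (R + α • 1))) := by rw [s]
    _ = (1 + ((2 * α) • (Aα⁻¹ * G * Uα⁻¹)) * X) * (R + α • 1) := by
        rw [add_mul, one_mul, smul_mul_assoc, smul_mul_assoc, smul_add, ← mul_assoc]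
        module
  calc 1 + (2 * α) • Vα⁻¹
      = (1 + (2 * α) • Vα⁻¹) * ((R - α • 1) * (R - α • 1)⁻¹) := by rw [mulinv _ hRu, mul_one]
  _ = ((1 + ((2 * α) • (Aα⁻¹ * G * Uα⁻¹)) * X) * (R + α • 1)) * (R - α • 1)⁻¹ := by
      rw [← mul_assoc, main]
  _ = (1 + ((2 * α) • (Aα⁻¹ * G * Uα⁻¹)) * X) * ((R + α • 1) * (R - α • 1)⁻¹) := by
      rw [mul_assoc]

lemma base_g (A G Q X : Mat) (α : ℝ) (Aα Uα : Mat)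
    (hAα : Aα = A - α • 1) (hUα : Uα = Aαᵀ + Q * Aα⁻¹ * G)
    (hAαu : IsUnit Aα) (hUαu : IsUnit Uα)
    (hCARE : Aᵀ * X + X * A + Q - X * G * X = 0)
    (R : Mat) (hR : R = A - G * X) (hRu : IsUnit (R - α • 1)) :
    X - (2 * α) • (Uα⁻¹ * Q * Aα⁻¹)
      = ((1 + (2 * α) • Uα⁻¹) * X) * ((R + α • 1) * (R - α • 1)⁻¹) := by
  have key1 : X * (R + α • 1) = -(Aαᵀ * X + Q) := care_key hAα hCARE hR
  have e : Uα * X + (Q - Q * Aα⁻¹ * (G * X)) = Aαᵀ * X + Q := by rw [hUα]; noncomm_ring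
  have eUX : Uα⁻¹ * (Uα * X) = X := by rw [← mul_assoc, invmul _ hUαu, one_mul]
  have s3 : X + Uα⁻¹ * (Q - Q * Aα⁻¹ * (G * X)) = Uα⁻¹ * (Aαᵀ * X + Q) := by
    calc X + Uα⁻¹ * (Q - Q * Aα⁻¹ * (G * X))
        = Uα⁻¹ * (Uα * X) + Uα⁻¹ * (Q - Q * Aα⁻¹ * (G * X)) := by rw [eUX]
    _ = Uα⁻¹ * (Uα * X + (Q - Q * Aα⁻¹ * (G * X))) := by rw [mul_add]
    _ = Uα⁻¹ * (Aαᵀ * X + Q) := by rw [e]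
  have hQA : Q * Aα⁻¹ * (R - α • 1) = Q - Q * Aα⁻¹ * (G * X) := by
    rw [hRalpha hAα hR, mul_sub, mul_assoc Q, invmul _ hAαu, mul_one, mul_assoc]
  have hXR : X * (R - α • 1) = X * (R + α • 1) - (2 * α) • X := by
    simp only [mul_sub, mul_add, mul_smul_comm, mul_one]
    module
  have main : (X - (2 * α) • (Uα⁻¹ * Q * Aα⁻¹)) * (R - α • 1)
      = (1 + (2 * α) • Uα⁻¹) * (X * (R + α • 1)) := by
    calc (X - (2 * α) • (Uα⁻¹ * Q * Aα⁻¹)) * (R - α • 1)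
        = X * (R - α • 1) - (2 * α) • (Uα⁻¹ * (Q * Aα⁻¹ * (R - α • 1))) := by
          rw [sub_mul, smul_mul_assoc, mul_assoc Uα⁻¹ Q Aα⁻¹,
            mul_assoc Uα⁻¹ (Q * Aα⁻¹) (R - α • 1)]
    _ = (X * (R + α • 1) - (2 * α) • X) - (2 * α) • (Uα⁻¹ * (Q - Q * Aα⁻¹ * (G * X))) := by
        rw [hXR, hQA]
    _ = X * (R + α • 1) - (2 * α) • (X + Uα⁻¹ * (Q - Q * Aα⁻¹ * (G * X))) := by
        rw [smul_add]; abel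
    _ = X * (R + α • 1) - (2 * α) • (Uα⁻¹ * (Aαᵀ * X + Q)) := by rw [s3]
    _ = X * (R + α • 1) + (2 * α) • (Uα⁻¹ * (X * (R + α • 1))) := by
        rw [key1, mul_neg, smul_neg]; abel
    _ = (1 + (2 * α) • Uα⁻¹) * (X * (R + α • 1)) := by rw [add_mul, one_mul, smul_mul_assoc]
  calc X - (2 * α) • (Uα⁻¹ * Q * Aα⁻¹)
      = (X - (2 * α) • (Uα⁻¹ * Q * Aα⁻¹)) * ((R - α • 1) * (R - α • 1)⁻¹) := by
        rw [mulinv _ hRu, mul_one]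
  _ = ((1 + (2 * α) • Uα⁻¹) * (X * (R + α • 1))) * (R - α • 1)⁻¹ := by rw [← mul_assoc, main]
  _ = ((1 + (2 * α) • Uα⁻¹) * X) * ((R + α • 1) * (R - α • 1)⁻¹) := by
      rw [mul_assoc, mul_assoc, mul_assoc]

end ADDAProof

open ADDAProof

theorem stmt_10 (n m p : ℕ)
    (A G Q : Matrix (Fin n) (Fin n) ℝ)
    (B : Matrix (Fin n) (Fin m) ℝ) (C : Matrix (Fin p) (Fin n) ℝ)
    (hG : G = B * Bᵀ) (hQ : Q = Cᵀ * C)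
    (α : ℝ) (hα : 0 < α)
    (Aα Uα Vα : Matrix (Fin n) (Fin n) ℝ)
    (hAα : Aα = A - α • 1)
    (hUα : Uα = Aαᵀ + Q * Aα⁻¹ * G)
    (hVα : Vα = Aα + G * (Aαᵀ)⁻¹ * Q)
    (hAαu : IsUnit Aα) (hUαu : IsUnit Uα) (hVαu : IsUnit Vα)
    (X Y : Matrix (Fin n) (Fin n) ℝ)
    (hXpsd : X.PosSemidef) (hYpsd : Y.PosSemidef)
    (hCARE : Aᵀ * X + X * A + Q - X * G * X = 0)
    (hDUAL : A * Y + Y * Aᵀ - Y * Q * Y + G = 0)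
    (R S : Matrix (Fin n) (Fin n) ℝ)
    (hR : R = A - G * X) (hS : S = Aᵀ - Q * Y)
    (hRu : IsUnit (R - α • 1)) (hSu : IsUnit (S - α • 1))
    (CR CS : Matrix (Fin n) (Fin n) ℝ)
    (hCR : CR = (R + α • 1) * (R - α • 1)⁻¹)
    (hCS : CS = (S + α • 1) * (S - α • 1)⁻¹)
    (Ahat Xs Ys : ℕ → Matrix (Fin n) (Fin n) ℝ)
    (hA0 : Ahat 0 = 1 + (2 * α) • Vα⁻¹)
    (hX0 : Xs 0 = (2 * α) • (Uα⁻¹ * Q * Aα⁻¹))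
    (hY0 : Ys 0 = (2 * α) • (Aα⁻¹ * G * Uα⁻¹))
    (hu1 : ∀ k, IsUnit (1 + Ys k * Xs k))
    (hu2 : ∀ k, IsUnit (1 + Xs k * Ys k))
    (hArec : ∀ k, Ahat (k + 1) = Ahat k * (1 + Ys k * Xs k)⁻¹ * Ahat k)
    (hXrec : ∀ k, Xs (k + 1) = Xs k + (Ahat k)ᵀ * (1 + Xs k * Ys k)⁻¹ * Xs k * Ahat k)
    (hYrec : ∀ k, Ys (k + 1) = Ys k + Ahat k * Ys k * (1 + Xs k * Ys k)⁻¹ * (Ahat k)ᵀ) :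
    (∀ k, ‖X - Xs k‖ ≤ (‖X‖ + ‖X‖ ^ 2 * ‖Y‖) * (‖CS ^ (2 ^ k)‖ * ‖CR ^ (2 ^ k)‖)) ∧
      (spectralRadius ℂ (CR.map (algebraMap ℝ ℂ)) < 1 →
        spectralRadius ℂ (CS.map (algebraMap ℝ ℂ)) < 1 →
        Tendsto (fun k => ‖X - Xs k‖) atTop (nhds 0)) := by
  -- basic symmetry and positivity facts
  have hGs : Gᵀ = G := by rw [hG, Matrix.transpose_mul, Matrix.transpose_transpose]
  have hQs : Qᵀ = Q := by rw [hQ, Matrix.transpose_mul, Matrix.transpose_transpose]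
  have hXsym : Xᵀ = X := by
    rw [← Matrix.conjTranspose_eq_transpose_of_trivial]; exact hXpsd.1
  have hYsym : Yᵀ = Y := by
    rw [← Matrix.conjTranspose_eq_transpose_of_trivial]; exact hYpsd.1
  have hGpsd : G.PosSemidef := by
    rw [hG, show Bᵀ = Bᴴ from (Matrix.conjTranspose_eq_transpose_of_trivial B).symm]
    exact Matrix.posSemidef_self_mul_conjTranspose B
  have hQpsd : Q.PosSemidef := by
    rw [hQ, show Cᵀ = Cᴴ from (Matrix.conjTranspose_eq_transpose_of_trivial C).symm]
    exact Matrix.posSemidef_conjTranspose_mul_self C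
  have hAαuT : IsUnit Aαᵀ := unitT hAαu
  have h2α : (0:ℝ) ≤ 2 * α := by linarith
  -- transpose bookkeeping
  have hVαT : Vαᵀ = Uα := by
    rw [hVα, hUα, Matrix.transpose_add, Matrix.transpose_mul, Matrix.transpose_mul,
      Matrix.transpose_nonsing_inv, Matrix.transpose_transpose, hQs, hGs, mul_assoc]
  have hUαT : Uαᵀ = Vα := by rw [← hVαT, Matrix.transpose_transpose]
  have hAαT : Aαᵀ = Aᵀ - α • 1 := by
    rw [hAα, Matrix.transpose_sub, Matrix.transpose_smul, Matrix.transpose_one]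
  have hDUAL' : (Aᵀ)ᵀ * Y + Y * Aᵀ + G - Y * Q * Y = 0 := by
    rw [Matrix.transpose_transpose]
    calc A * Y + Y * Aᵀ + G - Y * Q * Y = A * Y + Y * Aᵀ - Y * Q * Y + G := by abel
    _ = 0 := hDUAL
  have hUα_dual : Vα = (Aαᵀ)ᵀ + G * (Aαᵀ)⁻¹ * Q := by
    rw [Matrix.transpose_transpose]; exact hVα
  have hVα_dual : Uα = Aαᵀ + Q * ((Aαᵀ)ᵀ)⁻¹ * G := by
    rw [Matrix.transpose_transpose]; exact hUα
  -- c1 claims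
  have c1 : Vα * (Aα⁻¹ * G * Uα⁻¹) = G * (Aαᵀ)⁻¹ := claim_c1 hUα hVα hAαu hUαu
  have c1d : Uα * ((Aαᵀ)⁻¹ * Q * Vα⁻¹) = Q * Aα⁻¹ := by
    have := claim_c1 hUα_dual hVα_dual hAαuT hVαu
    rwa [Matrix.transpose_transpose] at this
  have claimX : (Aαᵀ)⁻¹ * Q * Vα⁻¹ = Uα⁻¹ * (Q * Aα⁻¹) := by
    refine lcancel hUαu ?_
    rw [c1d, ← mul_assoc, mulinv _ hUαu, one_mul]
  have claimY : Vα⁻¹ * (G * (Aαᵀ)⁻¹) = Aα⁻¹ * G * Uα⁻¹ := by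
    refine lcancel hVαu ?_
    rw [c1, ← mul_assoc, mulinv _ hVαu, one_mul]
  have claimX' : (Aαᵀ)⁻¹ * Q * Vα⁻¹ = Uα⁻¹ * Q * Aα⁻¹ := claimX.trans (mul_assoc _ _ _).symm
  have claimY' : Vα⁻¹ * G * (Aαᵀ)⁻¹ = Aα⁻¹ * G * Uα⁻¹ := (mul_assoc _ _ _).trans claimY
  -- symmetry of initial iterates
  have symX0 : (Uα⁻¹ * Q * Aα⁻¹)ᵀ = Uα⁻¹ * Q * Aα⁻¹ := by
    rw [Matrix.transpose_mul, Matrix.transpose_mul, Matrix.transpose_nonsing_inv,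
      Matrix.transpose_nonsing_inv, hQs, hUαT]
    exact (mul_assoc _ _ _).symm.trans claimX'
  have symY0 : (Aα⁻¹ * G * Uα⁻¹)ᵀ = Aα⁻¹ * G * Uα⁻¹ := by
    rw [Matrix.transpose_mul, Matrix.transpose_mul, Matrix.transpose_nonsing_inv,
      Matrix.transpose_nonsing_inv, hGs, hUαT]
    exact (mul_assoc _ _ _).symm.trans claimY'
  -- positivity of initial iterates
  set P : Matrix (Fin n) (Fin n) ℝ := (Aαᵀ)⁻¹ * Q * Aα⁻¹ with hP
  have hPpsd : P.PosSemidef := by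
    have := hQpsd.mul_mul_conjTranspose_same ((Aαᵀ)⁻¹)
    rwa [Matrix.conjTranspose_nonsing_inv,
      Matrix.conjTranspose_eq_transpose_of_trivial, Matrix.transpose_transpose] at this
  have hUfact : Uα = Aαᵀ * (1 + P * G) := by
    rw [hUα, mul_add, mul_one]
    congr 1
    rw [hP]
    have hx : Aαᵀ * ((Aαᵀ)⁻¹ * Q * Aα⁻¹ * G) = (Aαᵀ * (Aαᵀ)⁻¹) * (Q * Aα⁻¹ * G) := by
      noncomm_ring
    rw [hx, mulinv _ hAαuT, one_mul]
  have hVfact : Vα = (1 + G * P) * Aα := by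
    rw [hVα, add_mul, one_mul]
    congr 1
    rw [hP]
    have hx : G * ((Aαᵀ)⁻¹ * Q * Aα⁻¹) * Aα = (G * (Aαᵀ)⁻¹ * Q) * (Aα⁻¹ * Aα) := by
      noncomm_ring
    rw [hx, invmul _ hAαu, mul_one]
  have hunitPG : IsUnit (1 + P * G) := unit_factor_right (hUfact ▸ hUαu)
  have hunitGP : IsUnit (1 + G * P) := unit_factor_left (hVfact ▸ hVαu)
  have hUinv : Uα⁻¹ = (1 + P * G)⁻¹ * (Aαᵀ)⁻¹ := by rw [hUfact, Matrix.mul_inv_rev]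
  have r1 : Uα⁻¹ * Q * Aα⁻¹ = (1 + P * G)⁻¹ * P := by
    rw [hUinv]
    nth_rw 3 [hP]
    noncomm_ring
  have p1_0 : (Xs 0).PosSemidef := by
    rw [hX0, r1]
    exact psd_smul _ h2α (psd_mid hGpsd hPpsd hunitGP hunitPG)
  have p2_0 : (Ys 0).PosSemidef := by
    rw [hY0]
    have key : Aα⁻¹ * G * Uα⁻¹ = Aα⁻¹ * ((1 + G * P)⁻¹ * G) * (Aα⁻¹)ᴴ := by
      rw [Matrix.conjTranspose_nonsing_inv, Matrix.conjTranspose_eq_transpose_of_trivial,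
        hUinv, push G P hunitGP hunitPG]
      noncomm_ring
    rw [key]
    exact psd_smul _ h2α
      ((psd_mid hPpsd hGpsd hunitPG hunitGP).mul_mul_conjTranspose_same Aα⁻¹)
  -- induction pack
  have pack : ∀ k, ((Xs k)ᵀ = Xs k ∧ (Ys k)ᵀ = Ys k) ∧
      ((Xs k).PosSemidef ∧ (Ys k).PosSemidef) ∧
      (Ahat k = (1 + Ys k * X) * CR ^ 2 ^ k ∧
        (Ahat k)ᵀ = (1 + Xs k * Y) * CS ^ 2 ^ k) ∧
      (X - Xs k = (Ahat k)ᵀ * X * CR ^ 2 ^ k ∧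
        Y - Ys k = Ahat k * Y * CS ^ 2 ^ k) := by
    intro k
    induction k with
    | zero =>
      have hA0T : (Ahat 0)ᵀ = 1 + (2 * α) • Uα⁻¹ := by
        rw [hA0, Matrix.transpose_add, Matrix.transpose_one, Matrix.transpose_smul,
          Matrix.transpose_nonsing_inv, hVαT]
      have s1_0 : (Xs 0)ᵀ = Xs 0 := by rw [hX0, Matrix.transpose_smul, symX0]
      have s2_0 : (Ys 0)ᵀ = Ys 0 := by rw [hY0, Matrix.transpose_smul, symY0]
      have e0 : Ahat 0 = (1 + Ys 0 * X) * CR ^ 2 ^ 0 := by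
        rw [hA0, hY0, hCR]
        simp only [pow_zero, pow_one]
        exact base_e A G Q X α Aα Uα Vα R hAα hUα hVα hAαu hUαu hVαu hCARE hR hRu
      have f0 : (Ahat 0)ᵀ = (1 + Xs 0 * Y) * CS ^ 2 ^ 0 := by
        rw [hA0T, hX0, hCS]
        simp only [pow_zero, pow_one]
        have := base_e Aᵀ Q G Y α Aαᵀ Vα Uα S hAαT hUα_dual hVα_dual hAαuT hVαu hUαu
          hDUAL' hS hSu
        rwa [claimX'] at this
      have g0 : X - Xs 0 = (Ahat 0)ᵀ * X * CR ^ 2 ^ 0 := by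
        rw [hA0T, hX0, hCR]
        simp only [pow_zero, pow_one]
        have := base_g A G Q X α Aα Uα hAα hUα hAαu hUαu hCARE R hR hRu
        rw [this, mul_assoc]
      have h0 : Y - Ys 0 = Ahat 0 * Y * CS ^ 2 ^ 0 := by
        rw [hA0, hY0, hCS]
        simp only [pow_zero, pow_one]
        have := base_g Aᵀ Q G Y α Aαᵀ Vα hAαT hUα_dual hAαuT hVαu hDUAL' S hS hSu
        rwa [claimY'] at this
      exact ⟨⟨s1_0, s2_0⟩, ⟨p1_0, p2_0⟩, ⟨e0, f0⟩, ⟨g0, h0⟩⟩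
    | succ k ih =>
      obtain ⟨⟨s1, s2⟩, ⟨q1, q2⟩, ⟨ee, ff⟩, ⟨gg, hh⟩⟩ := ih
      have hpow2 : (2:ℕ) ^ (k+1) = 2 ^ k + 2 ^ k := by ring
      have hCR2 : CR ^ 2 ^ (k+1) = CR ^ 2 ^ k * CR ^ 2 ^ k := by rw [hpow2, pow_add]
      have hCS2 : CS ^ 2 ^ (k+1) = CS ^ 2 ^ k * CS ^ 2 ^ k := by rw [hpow2, pow_add]
      have hffT : Y - Ys k = ((Ahat k)ᵀ)ᵀ * Y * CS ^ 2 ^ k := by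
        rwa [Matrix.transpose_transpose]
      have hAT : (Ahat (k+1))ᵀ = (Ahat k)ᵀ * (1 + Xs k * Ys k)⁻¹ * (Ahat k)ᵀ := by
        rw [hArec k, Matrix.transpose_mul, Matrix.transpose_mul,
          Matrix.transpose_nonsing_inv, Matrix.transpose_add, Matrix.transpose_one,
          Matrix.transpose_mul, s1, s2, ← mul_assoc]
      have bridgeX : (Ahat k)ᵀ * (1 + Xs k * Ys k)⁻¹ * Xs k * Ahat k
          = (Ahat k)ᵀ * Xs k * (1 + Ys k * Xs k)⁻¹ * Ahat k := by
        rw [mul_assoc ((Ahat k)ᵀ), push (Xs k) (Ys k) (hu2 k) (hu1 k), ← mul_assoc]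
      have bridgeY : Ahat k * Ys k * (1 + Xs k * Ys k)⁻¹ * (Ahat k)ᵀ
          = Ahat k * (1 + Ys k * Xs k)⁻¹ * Ys k * (Ahat k)ᵀ := by
        rw [mul_assoc (Ahat k), ← push (Ys k) (Xs k) (hu1 k) (hu2 k), ← mul_assoc]
      have e2 : Ahat (k+1) = (1 + Ys (k+1) * X) * CR ^ 2 ^ (k+1) := by
        rw [hArec k, hCR2, hYrec k]
        exact core_e (Ahat k) (Ys k) (Xs k) X (CR ^ 2 ^ k) (hu1 k) (hu2 k) ee gg
      have f2 : (Ahat (k+1))ᵀ = (1 + Xs (k+1) * Y) * CS ^ 2 ^ (k+1) := by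
        rw [hAT, hCS2, hXrec k, bridgeX]
        have := core_e ((Ahat k)ᵀ) (Xs k) (Ys k) Y (CS ^ 2 ^ k) (hu2 k) (hu1 k) ff hffT
        rwa [Matrix.transpose_transpose] at this
      have g2 : X - Xs (k+1) = (Ahat (k+1))ᵀ * X * CR ^ 2 ^ (k+1) := by
        rw [hXrec k, hAT, hCR2]
        exact core_g (Ahat k) (Ys k) (Xs k) X (CR ^ 2 ^ k) (hu2 k) ee gg
      have h2 : Y - Ys (k+1) = Ahat (k+1) * Y * CS ^ 2 ^ (k+1) := by
        rw [hYrec k, hArec k, hCS2, bridgeY]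
        have := core_g ((Ahat k)ᵀ) (Xs k) (Ys k) Y (CS ^ 2 ^ k) (hu1 k) ff hffT
        rwa [Matrix.transpose_transpose] at this
      have s1' : (Xs (k+1))ᵀ = Xs (k+1) := by
        rw [hXrec k, Matrix.transpose_add, s1]
        congr 1
        rw [Matrix.transpose_mul, Matrix.transpose_mul, Matrix.transpose_mul,
          Matrix.transpose_transpose, Matrix.transpose_nonsing_inv, Matrix.transpose_add,
          Matrix.transpose_one, Matrix.transpose_mul, s1, s2]
        rw [← mul_assoc (Xs k) ((1 + Ys k * Xs k)⁻¹) (Ahat k),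
          ← push (Xs k) (Ys k) (hu2 k) (hu1 k)]
        noncomm_ring
      have s2' : (Ys (k+1))ᵀ = Ys (k+1) := by
        rw [hYrec k, Matrix.transpose_add, s2]
        congr 1
        rw [Matrix.transpose_mul, Matrix.transpose_mul, Matrix.transpose_mul,
          Matrix.transpose_transpose, Matrix.transpose_nonsing_inv, Matrix.transpose_add,
          Matrix.transpose_one, Matrix.transpose_mul, s1, s2]
        rw [← mul_assoc ((1 + Ys k * Xs k)⁻¹) (Ys k) ((Ahat k)ᵀ),
          push (Ys k) (Xs k) (hu1 k) (hu2 k)]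
        noncomm_ring
      have q1' : (Xs (k+1)).PosSemidef := by
        rw [hXrec k]
        refine q1.add ?_
        have hmid := psd_mid q2 q1 (hu1 k) (hu2 k)
        have hc := hmid.mul_mul_conjTranspose_same ((Ahat k)ᵀ)
        rw [Matrix.conjTranspose_eq_transpose_of_trivial, Matrix.transpose_transpose] at hc
        have hshape : (Ahat k)ᵀ * ((1 + Xs k * Ys k)⁻¹ * Xs k) * Ahat k
            = (Ahat k)ᵀ * (1 + Xs k * Ys k)⁻¹ * Xs k * Ahat k := by noncomm_ring
        rwa [hshape] at hc
      have q2' : (Ys (k+1)).PosSemidef := by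
        rw [hYrec k]
        refine q2.add ?_
        have hmid := psd_mid q1 q2 (hu2 k) (hu1 k)
        have hc := hmid.mul_mul_conjTranspose_same (Ahat k)
        rw [Matrix.conjTranspose_eq_transpose_of_trivial] at hc
        have hshape : Ahat k * ((1 + Ys k * Xs k)⁻¹ * Ys k) * (Ahat k)ᵀ
            = Ahat k * Ys k * (1 + Xs k * Ys k)⁻¹ * (Ahat k)ᵀ := by
          rw [push (Ys k) (Xs k) (hu1 k) (hu2 k)]; noncomm_ring
        rwa [hshape] at hc
      exact ⟨⟨s1', s2'⟩, ⟨q1', q2'⟩, ⟨e2, f2⟩, ⟨g2, h2⟩⟩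
  -- part 1: the bound
  have part1 : ∀ k, ‖X - Xs k‖ ≤ (‖X‖ + ‖X‖ ^ 2 * ‖Y‖) * (‖CS ^ 2 ^ k‖ * ‖CR ^ 2 ^ k‖) := by
    intro k
    obtain ⟨⟨s1, s2⟩, ⟨q1, q2⟩, ⟨ee, ff⟩, ⟨gg, hh⟩⟩ := pack k
    have hXXk : X - Xs k = (1 + Xs k * Y) * (CS ^ 2 ^ k * (X * CR ^ 2 ^ k)) := by
      calc X - Xs k = (Ahat k)ᵀ * X * CR ^ 2 ^ k := gg
      _ = (1 + Xs k * Y) * (CS ^ 2 ^ k * (X * CR ^ 2 ^ k)) := by rw [ff]; noncomm_ring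
    have hAT2 : (Ahat k)ᵀ = (CR ^ 2 ^ k)ᵀ * (1 + X * Ys k) := by
      rw [ee, Matrix.transpose_mul, Matrix.transpose_add, Matrix.transpose_one,
        Matrix.transpose_mul, hXsym, s2]
    have hdiff : X - Xs k = (CR ^ 2 ^ k)ᵀ * (X + X * Ys k * X) * CR ^ 2 ^ k := by
      rw [gg, hAT2]; noncomm_ring
    have hpsdDiff : (X - Xs k).PosSemidef := by
      rw [hdiff]
      have hmid : (X + X * Ys k * X).PosSemidef := by
        refine hXpsd.add ?_
        have := q2.mul_mul_conjTranspose_same X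
        rwa [Matrix.conjTranspose_eq_transpose_of_trivial, hXsym] at this
      have := hmid.mul_mul_conjTranspose_same ((CR ^ 2 ^ k)ᵀ)
      rwa [Matrix.conjTranspose_eq_transpose_of_trivial, Matrix.transpose_transpose] at this
    have hnormXk : ‖Xs k‖ ≤ ‖X‖ := psd_norm_le q1 hpsdDiff
    have bound1 : ‖1 + Xs k * Y‖ ≤ 1 + ‖X‖ * ‖Y‖ := by
      refine le_trans (norm_add_le _ _) (add_le_add norm_one_le ?_)
      refine le_trans (Matrix.l2_opNorm_mul _ _) ?_
      exact mul_le_mul_of_nonneg_right hnormXk (norm_nonneg _)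
    calc ‖X - Xs k‖ = ‖(1 + Xs k * Y) * (CS ^ 2 ^ k * (X * CR ^ 2 ^ k))‖ := by rw [hXXk]
    _ ≤ ‖1 + Xs k * Y‖ * ‖CS ^ 2 ^ k * (X * CR ^ 2 ^ k)‖ := Matrix.l2_opNorm_mul _ _
    _ ≤ ‖1 + Xs k * Y‖ * (‖CS ^ 2 ^ k‖ * (‖X‖ * ‖CR ^ 2 ^ k‖)) := by
        refine mul_le_mul_of_nonneg_left ?_ (norm_nonneg _)
        refine le_trans (Matrix.l2_opNorm_mul _ _) ?_
        refine mul_le_mul_of_nonneg_left (Matrix.l2_opNorm_mul _ _) (norm_nonneg _)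
    _ ≤ (1 + ‖X‖ * ‖Y‖) * (‖CS ^ 2 ^ k‖ * (‖X‖ * ‖CR ^ 2 ^ k‖)) := by
        refine mul_le_mul_of_nonneg_right bound1 ?_
        positivity
    _ = (‖X‖ + ‖X‖ ^ 2 * ‖Y‖) * (‖CS ^ 2 ^ k‖ * ‖CR ^ 2 ^ k‖) := by ring
  refine ⟨part1, fun hρR hρS => ?_⟩
  -- part 2: convergence
  have hmapR : ∀ j : ℕ, (CR.map (algebraMap ℝ ℂ)) ^ j = (CR ^ j).map (algebraMap ℝ ℂ) := by
    intro j
    have h1 : CR.map (algebraMap ℝ ℂ) = (algebraMap ℝ ℂ).mapMatrix CR := rfl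
    rw [h1, ← map_pow]
    rfl
  have hmapS : ∀ j : ℕ, (CS.map (algebraMap ℝ ℂ)) ^ j = (CS ^ j).map (algebraMap ℝ ℂ) := by
    intro j
    have h1 : CS.map (algebraMap ℝ ℂ) = (algebraMap ℝ ℂ).mapMatrix CS := rfl
    rw [h1, ← map_pow]
    rfl
  have hcr : Tendsto (fun k : ℕ => ‖CR ^ 2 ^ k‖) atTop (nhds 0) := by
    have hc := (pow_norm_tendsto _ hρR).comp two_pow_tendsto
    refine squeeze_zero (fun k => norm_nonneg _) (fun k => ?_) hc
    calc ‖CR ^ 2 ^ k‖ ≤ ‖(CR ^ 2 ^ k).map (algebraMap ℝ ℂ)‖ := real_norm_le_complex _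
    _ = ‖(CR.map (algebraMap ℝ ℂ)) ^ 2 ^ k‖ := by rw [hmapR]
  have hcs : Tendsto (fun k : ℕ => ‖CS ^ 2 ^ k‖) atTop (nhds 0) := by
    have hc := (pow_norm_tendsto _ hρS).comp two_pow_tendsto
    refine squeeze_zero (fun k => norm_nonneg _) (fun k => ?_) hc
    calc ‖CS ^ 2 ^ k‖ ≤ ‖(CS ^ 2 ^ k).map (algebraMap ℝ ℂ)‖ := real_norm_le_complex _
    _ = ‖(CS.map (algebraMap ℝ ℂ)) ^ 2 ^ k‖ := by rw [hmapS]
  have hprod : Tendsto (fun k : ℕ => ‖CS ^ 2 ^ k‖ * ‖CR ^ 2 ^ k‖) atTop (nhds 0) := by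
    simpa using hcs.mul hcr
  have hfinal : Tendsto
      (fun k : ℕ => (‖X‖ + ‖X‖ ^ 2 * ‖Y‖) * (‖CS ^ 2 ^ k‖ * ‖CR ^ 2 ^ k‖)) atTop (nhds 0) := by
    simpa using hprod.const_mul (‖X‖ + ‖X‖ ^ 2 * ‖Y‖)
  exact squeeze_zero (fun k => norm_nonneg _) (fun k => part1 k) hfinal
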